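/- Let η ≥ 0, N ≥ 1, and l₁, …, l_N ∈ [0, 1]. Let z ∈ Δ(N) and define z′ ∈ Δ(N) by z′(i) = e^{−η·lᵢ}·z(i) / Σ_{j=1}^N e^{−η·lⱼ}·z(j). Then ‖z − z′‖ ≤ η. -/
import Mathlib


/-- Total-variation distance between two points of the simplex,
    ‖z − z′‖ = (1/2)·Σᵢ |zᵢ − z′ᵢ|. -/
noncomputable def tv {N : ℕ} (z z' : Fin N → ℝ) : ℝ := (1/2) * ∑ i, |z i - z' i|

theorem stmt_10 (N : ℕ) (hN : 1 ≤ N) (η : ℝ) (hη : 0 ≤ η)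
    (l : Fin N → ℝ) (hl : ∀ i, l i ∈ Set.Icc (0:ℝ) 1)
    (z : Fin N → ℝ) (hz : z ∈ stdSimplex ℝ (Fin N)) :
    tv z (fun i => Real.exp (-η * l i) * z i /
        ∑ j, Real.exp (-η * l j) * z j) ≤ η := by
  obtain ⟨hz0, hz1⟩ := hz
  set W : ℝ := ∑ j, Real.exp (-η * l j) * z j with hW
  have hexp_le : ∀ j, Real.exp (-η * l j) ≤ 1 := fun j => by
    have := (hl j).1
    have : -η * l j ≤ 0 := by nlinarith
    simpa using Real.exp_le_one_iff.mpr this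
  have hexp_ge : ∀ j, Real.exp (-η) ≤ Real.exp (-η * l j) := fun j => by
    have := (hl j).2
    apply Real.exp_le_exp.mpr
    nlinarith
  have hW_le : W ≤ 1 := by
    calc W ≤ ∑ j, z j := Finset.sum_le_sum fun j _ => by
            have := hexp_le j; have := hz0 j; nlinarith
    _ = 1 := hz1
  have hW_ge : Real.exp (-η) ≤ W := by
    calc Real.exp (-η) = ∑ j, Real.exp (-η) * z j := by
          rw [← Finset.mul_sum, hz1, mul_one]
    _ ≤ W := Finset.sum_le_sum fun j _ => by
          have := hexp_ge j; have := hz0 j; nlinarith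
  have hW_pos : 0 < W := lt_of_lt_of_le (Real.exp_pos _) hW_ge
  set z' : Fin N → ℝ := fun i => Real.exp (-η * l i) * z i / W with hz'
  have hsum' : ∑ i, z' i = 1 := by
    simp only [hz', div_eq_mul_inv, ← Finset.sum_mul]
    exact mul_inv_cancel₀ (ne_of_gt hW_pos)
  have hsum_diff : ∑ i, (z i - z' i) = 0 := by
    rw [Finset.sum_sub_distrib, hz1, hsum']; ring
  -- key bound: z i - z' i ≤ (1 - exp(-η)) * z i, with RHS nonneg
  have hkey : ∀ i, max (z i - z' i) 0 ≤ (1 - Real.exp (-η)) * z i := by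
    intro i
    have h1 : Real.exp (-η) * z i ≤ z' i := by
      rw [hz', le_div_iff₀ hW_pos]
      have h3 := hexp_ge i; have h4 := hz0 i
      nlinarith [Real.exp_pos (-η), mul_nonneg (Real.exp_pos (-η)).le h4]
    have h2 : 0 ≤ (1 - Real.exp (-η)) * z i := by
      have : Real.exp (-η) ≤ 1 := Real.exp_le_one_iff.mpr (by linarith)
      have := hz0 i; nlinarith
    exact max_le (by nlinarith) h2
  have habs : ∀ i, |z i - z' i| = 2 * max (z i - z' i) 0 - (z i - z' i) := by
    intro i; rcases le_total (z i - z' i) 0 with h | h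
    · rw [abs_of_nonpos h, max_eq_right h]; ring
    · rw [abs_of_nonneg h, max_eq_left h]; ring
  have : tv z z' = ∑ i, max (z i - z' i) 0 := by
    unfold tv
    simp only [habs]
    rw [Finset.sum_sub_distrib, hsum_diff, ← Finset.mul_sum]
    ring
  rw [this]
  calc ∑ i, max (z i - z' i) 0 ≤ ∑ i, (1 - Real.exp (-η)) * z i :=
        Finset.sum_le_sum fun i _ => hkey i
  _ = 1 - Real.exp (-η) := by rw [← Finset.mul_sum, hz1, mul_one]
  _ ≤ η := by have := Real.add_one_le_exp (-η); linarith
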